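/- For all integers v ≥ 1 and 1 ≤ λ ≤ v, one has ∑_{k=1}^{λ} (−1)^{λ+k}·(v+2k−1)! / ((2k−1)!·(λ−k)!·k!) = (v!/λ!)·∑_{k=0}^{λ} C(λ,k)·C(v−1, v−λ−k)·2^{λ−k}; in particular the left-hand side is nonnegative. -/

import Mathlib

/-- Binomial coefficient with integer lower index, with the convention that it
vanishes for negative lower index. -/
def chooseZ (n : ℕ) (m : ℤ) : ℕ := if 0 ≤ m then n.choose m.toNat else 0

open Polynomial Finset


lemma polyid (v lam : ℕ) (hv : 1 ≤ v) :
    (∑ k ∈ Finset.range (lam+1),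
        C ((-1:ℤ)^(k+lam) * (lam.choose k)) * (X+1)^(v-1+2*k))
      = (X:ℤ[X])^lam * ((X+1)^(v-1) * (X + C 2)^lam) := by
  have h := sub_pow ((X+1:ℤ[X])^2) 1 lam
  have h2 : ((X+1:ℤ[X])^2 - 1)^lam = (X:ℤ[X])^lam * (X + C 2)^lam := by
    rw [← mul_pow]; congr 1
    have hC : (C 2 : ℤ[X]) = 2 := C_eq_natCast 2
    rw [hC]; ring
  calc (∑ k ∈ Finset.range (lam+1),
        C ((-1:ℤ)^(k+lam) * (lam.choose k)) * (X+1)^(v-1+2*k))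
      = (X+1)^(v-1) * ∑ k ∈ Finset.range (lam+1),
          (-1)^(k+lam) * ((X+1:ℤ[X])^2)^k * 1^(lam-k) * (lam.choose k) := by
        rw [Finset.mul_sum]
        refine Finset.sum_congr rfl fun k hk => ?_
        rw [map_mul, map_pow, map_neg, map_one, C_eq_natCast, pow_add, ← pow_mul]
        ring
    _ = (X+1)^(v-1) * ((X+1:ℤ[X])^2 - 1)^lam := by rw [← h]
    _ = (X:ℤ[X])^lam * ((X+1)^(v-1) * (X + C 2)^lam) := by rw [h2]; ring

lemma keyZ (v lam : ℕ) (hv : 1 ≤ v) (h2 : lam ≤ v) :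
    (∑ k ∈ Finset.range (lam+1), (-1:ℤ)^(k+lam) * (lam.choose k) * ((v-1+2*k).choose v))
  = ∑ j ∈ Finset.range (lam+1), (lam.choose j : ℤ) * (chooseZ (v-1) ((v:ℤ)-lam-j) : ℤ) * 2^(lam-j) := by
  have hp := congrArg (fun p : ℤ[X] => p.coeff v) (polyid v lam hv)
  simp only [finset_sum_coeff, coeff_C_mul, coeff_X_add_one_pow] at hp
  have hv' : v = (v - lam) + lam := (Nat.sub_add_cancel h2).symm
  rw [hv', coeff_X_pow_mul, coeff_mul] at hp
  set d := v - lam with hd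
  rw [Nat.sum_antidiagonal_eq_sum_range_succ_mk] at hp
  simp only [coeff_X_add_one_pow, coeff_X_add_C_pow] at hp
  rw [← hv'] at hp
  rw [hp]
  set g : ℕ → ℤ := fun j => (lam.choose j : ℤ) * (if j ≤ d then ((v-1).choose (d-j) : ℤ) else 0) * 2^(lam-j) with hg
  have clA : (∑ j ∈ Finset.range (d+1), ((v-1).choose j : ℤ) * (2^(lam-(d-j)) * (lam.choose (d-j))))
      = ∑ j ∈ Finset.range (d+1), g j := by
    rw [← Finset.sum_range_reflect]
    refine Finset.sum_congr rfl fun j hj => ?_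
    simp only [Finset.mem_range] at hj
    have hjd : j ≤ d := by omega
    have e1 : d + 1 - 1 - j = d - j := by omega
    have e2 : d - (d - j) = j := by omega
    rw [e1, e2, hg]
    simp only [hjd, if_pos]
    ring
  have clB : (∑ j ∈ Finset.range (d+1), g j) = ∑ j ∈ Finset.range (v+1), g j := by
    refine Finset.sum_subset (Finset.range_subset_range.mpr (by omega)) fun j hj hj' => ?_
    simp only [Finset.mem_range] at hj hj'
    have : ¬ (j ≤ d) := by omega
    simp [hg, this]
  have clC : (∑ j ∈ Finset.range (lam+1), (lam.choose j : ℤ) * (chooseZ (v-1) ((v:ℤ)-lam-j)) * 2^(lam-j))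
      = ∑ j ∈ Finset.range (v+1), g j := by
    rw [Finset.sum_subset (Finset.range_subset_range.mpr (Nat.succ_le_succ h2))
      (fun j hj hj' => by
        simp only [Finset.mem_range] at hj hj'
        have : lam.choose j = 0 := Nat.choose_eq_zero_of_lt (by omega)
        simp [hg, this])]
    refine Finset.sum_congr rfl fun j hj => ?_
    rw [hg]
    congr 1
    congr 1
    unfold chooseZ
    by_cases hc : j ≤ d
    · have h0 : (0:ℤ) ≤ (v:ℤ) - lam - j := by omega
      have ht : ((v:ℤ) - lam - j).toNat = d - j := by omega
      rw [if_pos h0, ht, if_pos hc]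
    · have h0 : ¬ (0:ℤ) ≤ (v:ℤ) - lam - j := by omega
      rw [if_neg h0, if_neg hc]
      simp
  rw [clA, clB, ← clC]



theorem alternating_sum_rewrite (v lam : ℕ) (hv : 1 ≤ v) (h1 : 1 ≤ lam) (h2 : lam ≤ v) :
    (∑ k ∈ Finset.Icc 1 lam,
        (-1 : ℝ) ^ (lam + k) * ((v + 2 * k - 1).factorial : ℝ) /
          (((2 * k - 1).factorial : ℝ) * ((lam - k).factorial : ℝ) * (k.factorial : ℝ))
      = ((v.factorial : ℝ) / (lam.factorial : ℝ)) *
        ∑ k ∈ Finset.range (lam + 1),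
          (lam.choose k : ℝ) * (chooseZ (v - 1) ((v : ℤ) - lam - k) : ℝ) *
            (2 : ℝ) ^ (lam - k))
    ∧ 0 ≤ ∑ k ∈ Finset.Icc 1 lam,
        (-1 : ℝ) ^ (lam + k) * ((v + 2 * k - 1).factorial : ℝ) /
          (((2 * k - 1).factorial : ℝ) * ((lam - k).factorial : ℝ) * (k.factorial : ℝ)) := by
  have hterm : ∀ k ∈ Finset.Icc 1 lam,
      (-1:ℝ)^(lam+k) * ((v+2*k-1).factorial : ℝ) /
          (((2*k-1).factorial:ℝ) * ((lam-k).factorial:ℝ) * (k.factorial:ℝ))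
      = ((v.factorial:ℝ)/(lam.factorial:ℝ)) *
          ((-1:ℝ)^(k+lam) * (lam.choose k : ℝ) * (((v-1+2*k).choose v : ℕ) : ℝ)) := by
    intro k hk
    obtain ⟨hk1, hk2⟩ := Finset.mem_Icc.mp hk
    have e0 : v + 2*k - 1 = v - 1 + 2*k := by omega
    have hA : ((v-1+2*k).choose v) * v.factorial * (2*k-1).factorial = (v-1+2*k).factorial := by
      have h := Nat.choose_mul_factorial_mul_factorial (show v ≤ v-1+2*k by omega)
      rwa [show v-1+2*k - v = 2*k-1 by omega] at h
    have hB : lam.choose k * k.factorial * (lam-k).factorial = lam.factorial :=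
      Nat.choose_mul_factorial_mul_factorial hk2
    have hA' : ((v+2*k-1).factorial : ℝ)
        = ((v-1+2*k).choose v : ℝ) * v.factorial * (2*k-1).factorial := by
      rw [e0]; exact_mod_cast hA.symm
    have hB' : (lam.factorial : ℝ)
        = (lam.choose k : ℝ) * k.factorial * (lam-k).factorial := by exact_mod_cast hB.symm
    have hsign : (-1:ℝ)^(lam+k) = (-1:ℝ)^(k+lam) := by rw [add_comm]
    rw [hA', hB', hsign]
    have n1 : ((2*k-1).factorial : ℝ) ≠ 0 := Nat.cast_ne_zero.mpr (Nat.factorial_ne_zero _)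
    have n2 : ((lam-k).factorial : ℝ) ≠ 0 := Nat.cast_ne_zero.mpr (Nat.factorial_ne_zero _)
    have n3 : ((k).factorial : ℝ) ≠ 0 := Nat.cast_ne_zero.mpr (Nat.factorial_ne_zero _)
    have n4 : ((lam.choose k : ℕ) : ℝ) ≠ 0 :=
      Nat.cast_ne_zero.mpr (Nat.choose_pos hk2).ne'
    field_simp
  have hins : Finset.range (lam+1) = insert 0 (Finset.Icc 1 lam) := by
    ext x
    simp only [Finset.mem_range, Finset.mem_insert, Finset.mem_Icc]
    omega
  have h0term : (-1:ℝ)^(0+lam) * (lam.choose 0 : ℝ) * (((v-1+2*0).choose v : ℕ) : ℝ) = 0 := by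
    have hz : (v-1).choose v = 0 := Nat.choose_eq_zero_of_lt (by omega)
    simp [hz]
  have hkey := keyZ v lam hv h2
  have hR := congrArg (fun z : ℤ => (z : ℝ)) hkey
  push_cast at hR
  have heq : ∑ k ∈ Finset.Icc 1 lam,
        (-1 : ℝ) ^ (lam + k) * ((v + 2 * k - 1).factorial : ℝ) /
          (((2 * k - 1).factorial : ℝ) * ((lam - k).factorial : ℝ) * (k.factorial : ℝ))
      = ((v.factorial : ℝ) / (lam.factorial : ℝ)) *
        ∑ k ∈ Finset.range (lam + 1),
          (lam.choose k : ℝ) * (chooseZ (v - 1) ((v : ℤ) - lam - k) : ℝ) *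
            (2 : ℝ) ^ (lam - k) := by
    rw [Finset.sum_congr rfl hterm, ← Finset.mul_sum]
    congr 1
    have : ∑ k ∈ Finset.range (lam+1),
        (-1:ℝ)^(k+lam) * (lam.choose k : ℝ) * (((v-1+2*k).choose v : ℕ) : ℝ)
        = ∑ k ∈ Finset.Icc 1 lam,
        (-1:ℝ)^(k+lam) * (lam.choose k : ℝ) * (((v-1+2*k).choose v : ℕ) : ℝ) := by
      rw [hins, Finset.sum_insert (by simp), h0term, zero_add]
    rw [← this, hR]
  refine ⟨heq, ?_⟩
  rw [heq]
  apply mul_nonneg (by positivity)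
  apply Finset.sum_nonneg
  intro k hk
  positivity
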